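/- arXiv:2603.06747 — 2 statements merged into one kernel-verified Lean document; each statement's English description precedes it below -/
import Mathlib

section
/- Let k and l be positive integers, let G be a k-degenerate graph and H an l-degenerate graph. Then AT(G +_R H) ≤ k + l + 1. -/
open scoped Classical

/-- The outdegree of a vertex `v` in a finite set of arcs `A`. -/
noncomputable def arcOutDeg {V : Type*} (A : Finset (V × V)) (v : V) : ℕ :=
  (A.filter fun a => a.1 = v).card

/-- The indegree of a vertex `v` in a finite set of arcs `A`. -/
noncomputable def arcInDeg {V : Type*} (A : Finset (V × V)) (v : V) : ℕ :=
  (A.filter fun a => a.2 = v).card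

/-- `A` is an orientation of the simple graph `G`: every arc of `A` joins adjacent
vertices, and every edge of `G` receives exactly one of its two possible directions. -/
def IsOrientation {V : Type*} (G : SimpleGraph V) (A : Finset (V × V)) : Prop :=
  (∀ a ∈ A, G.Adj a.1 a.2) ∧ ∀ u v : V, G.Adj u v → ((u, v) ∈ A ↔ (v, u) ∉ A)

/-- A set of arcs is Eulerian if at every vertex the indegree equals the outdegree. -/
def IsEulerianSub {V : Type*} (B : Finset (V × V)) : Prop :=
  ∀ v : V, arcInDeg B v = arcOutDeg B v

/-- An orientation (given by its arc set `A`) is an Alon–Tarsi orientation if the number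
of its even Eulerian sub-digraphs differs from the number of its odd Eulerian
sub-digraphs. -/
def IsATOrientation {V : Type*} (A : Finset (V × V)) : Prop :=
  (A.powerset.filter fun B => IsEulerianSub B ∧ Even B.card).card ≠
    (A.powerset.filter fun B => IsEulerianSub B ∧ ¬ Even B.card).card

/-- The Alon–Tarsi number of `G`: the least `k` such that `G` has an Alon–Tarsi
orientation with maximum outdegree at most `k - 1` (i.e. `< k`). -/
noncomputable def alonTarsiNumber {V : Type*} (G : SimpleGraph V) : ℕ :=
  sInf {k : ℕ | ∃ A : Finset (V × V),
    IsOrientation G A ∧ IsATOrientation A ∧ ∀ v : V, arcOutDeg A v < k}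

/-- A graph is `k`-degenerate if every nonempty (induced) subgraph has a vertex of
degree at most `k`. -/
def Degenerate {V : Type*} (k : ℕ) (G : SimpleGraph V) : Prop :=
  ∀ s : Finset V, s.Nonempty → ∃ v ∈ s, (s.filter fun u => G.Adj v u).card ≤ k

/-- The subdivision graph `S(G)`: each edge `uv` of `G` is replaced by a path `u-e-v`
through the new vertex `e` corresponding to `uv`. -/
def subdivisionGraph {V : Type*} (G : SimpleGraph V) : SimpleGraph (V ⊕ ↥G.edgeSet) :=
  SimpleGraph.fromRel fun a b =>
    match a, b with
    | Sum.inl u, Sum.inr e => u ∈ (e : Sym2 V)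
    | _, _ => False

/-- The graph `R(G)`: `G` together with, for each edge `uv`, a new vertex joined to
`u` and `v`. -/
def rGraph {V : Type*} (G : SimpleGraph V) : SimpleGraph (V ⊕ ↥G.edgeSet) :=
  SimpleGraph.fromRel fun a b =>
    match a, b with
    | Sum.inl u, Sum.inl v => G.Adj u v
    | Sum.inl u, Sum.inr e => u ∈ (e : Sym2 V)
    | _, _ => False

/-- The graph `Q(G)`: new vertices joined to the endpoints of their edges, and two new
vertices joined iff the corresponding edges of `G` share an endpoint; original
vertices are pairwise nonadjacent. -/
def qGraph {V : Type*} (G : SimpleGraph V) : SimpleGraph (V ⊕ ↥G.edgeSet) :=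
  SimpleGraph.fromRel fun a b =>
    match a, b with
    | Sum.inl u, Sum.inr e => u ∈ (e : Sym2 V)
    | Sum.inr e, Sum.inr f => e ≠ f ∧ ∃ u : V, u ∈ (e : Sym2 V) ∧ u ∈ (f : Sym2 V)
    | _, _ => False

/-- The total graph `T(G)`. -/
def tGraph {V : Type*} (G : SimpleGraph V) : SimpleGraph (V ⊕ ↥G.edgeSet) :=
  SimpleGraph.fromRel fun a b =>
    match a, b with
    | Sum.inl u, Sum.inl v => G.Adj u v
    | Sum.inl u, Sum.inr e => u ∈ (e : Sym2 V)
    | Sum.inr e, Sum.inr f => e ≠ f ∧ ∃ u : V, u ∈ (e : Sym2 V) ∧ u ∈ (f : Sym2 V)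
    | _, _ => False

/-- The `F`-sum construction: given a graph `K` on `V ⊕ E` (playing the role of `F(G)`,
whose "original" vertices are those of the form `Sum.inl u`) and a graph `H` on `W`,
two vertices `(u₁, u₂)` and `(v₁, v₂)` are adjacent iff either `u₁ = v₁` is an original
vertex and `u₂v₂ ∈ E(H)`, or `u₂ = v₂` and `u₁v₁ ∈ E(K)`. -/
def fSum {V E W : Type*} (K : SimpleGraph (V ⊕ E)) (H : SimpleGraph W) :
    SimpleGraph ((V ⊕ E) × W) :=
  SimpleGraph.fromRel fun a b =>
    (a.1 = b.1 ∧ (∃ u : V, a.1 = Sum.inl u) ∧ H.Adj a.2 b.2) ∨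
      (a.2 = b.2 ∧ K.Adj a.1 b.1)

/-- The `S`-sum `G +_S H`. -/
def sSum {V W : Type*} (G : SimpleGraph V) (H : SimpleGraph W) :
    SimpleGraph ((V ⊕ ↥G.edgeSet) × W) :=
  fSum (subdivisionGraph G) H

/-- The `R`-sum `G +_R H`. -/
def rSum {V W : Type*} (G : SimpleGraph V) (H : SimpleGraph W) :
    SimpleGraph ((V ⊕ ↥G.edgeSet) × W) :=
  fSum (rGraph G) H

/-- The `Q`-sum `G +_Q H`. -/
def qSum {V W : Type*} (G : SimpleGraph V) (H : SimpleGraph W) :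
    SimpleGraph ((V ⊕ ↥G.edgeSet) × W) :=
  fSum (qGraph G) H

/-- The `T`-sum `G +_T H`. -/
def tSum {V W : Type*} (G : SimpleGraph V) (H : SimpleGraph W) :
    SimpleGraph ((V ⊕ ↥G.edgeSet) × W) :=
  fSum (tGraph G) H

/-- The star graph `S_n = K_{1,n}`. -/
def starGraph (n : ℕ) : SimpleGraph (Fin 1 ⊕ Fin n) :=
  completeBipartiteGraph (Fin 1) (Fin n)

/-! ### Auxiliary lemmas -/

lemma degen_order_on {V : Type*} {d : ℕ} {G : SimpleGraph V} (hG : Degenerate d G) :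
    ∀ s : Finset V, ∃ f : V → ℕ, Set.InjOn f s ∧
      ∀ v ∈ s, (s.filter fun u => G.Adj v u ∧ f v < f u).card ≤ d := by
  intro s
  induction s using Finset.strongInduction with
  | _ s ih =>
    rcases s.eq_empty_or_nonempty with rfl | hs
    · exact ⟨fun _ => 0, by simp, by simp⟩
    · obtain ⟨v, hv, hdeg⟩ := hG s hs
      obtain ⟨f, hfinj, hf⟩ := ih (s.erase v) (Finset.erase_ssubset hv)
      refine ⟨fun u => if u = v then 0 else f u + 1, ?_, ?_⟩
      · intro a ha b hb hab
        simp only at hab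
        by_cases hav : a = v <;> by_cases hbv : b = v
        · exact hav.trans hbv.symm
        · rw [if_pos hav, if_neg hbv] at hab; omega
        · rw [if_neg hav, if_pos hbv] at hab; omega
        · rw [if_neg hav, if_neg hbv] at hab
          exact hfinj (by simpa [Finset.mem_erase, hav] using ha)
            (by simpa [Finset.mem_erase, hbv] using hb) (by omega)
      · intro w hw
        by_cases hwv : w = v
        · subst hwv
          refine le_trans (Finset.card_le_card ?_) hdeg
          intro u hu
          simp only [Finset.mem_filter] at hu ⊢
          exact ⟨hu.1, hu.2.1⟩
        · have hw' : w ∈ s.erase v := Finset.mem_erase.2 ⟨hwv, hw⟩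
          refine le_trans (Finset.card_le_card ?_) (hf w hw')
          intro u hu
          simp only [Finset.mem_filter] at hu
          obtain ⟨hus, hadj, hlt⟩ := hu
          by_cases huv : u = v
          · simp [hwv, huv] at hlt
          · simp only [Finset.mem_filter, Finset.mem_erase]
            simp [hwv, huv] at hlt
            exact ⟨⟨huv, hus⟩, hadj, hlt⟩

lemma degen_order {V : Type*} [Fintype V] {d : ℕ} {G : SimpleGraph V}
    (hG : Degenerate d G) :
    ∃ f : V → ℕ, Function.Injective f ∧
      ∀ v : V, (Finset.univ.filter fun u => G.Adj v u ∧ f v < f u).card ≤ d := by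
  obtain ⟨f, hinj, hf⟩ := degen_order_on hG Finset.univ
  refine ⟨f, fun a b hab => hinj (by simp) (by simp) hab, fun v => hf v (by simp)⟩

lemma eulerian_empty_of_mono {V : Type*} {ord : V → ℕ} {B : Finset (V × V)}
    (hB : ∀ a ∈ B, ord a.1 < ord a.2) (hE : IsEulerianSub B) : B = ∅ := by
  by_contra hne
  obtain ⟨a0, ha0⟩ := Finset.nonempty_iff_ne_empty.2 hne
  set T : Finset V := B.image Prod.snd with hT
  have hTne : T.Nonempty := ⟨a0.2, Finset.mem_image_of_mem _ ha0⟩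
  obtain ⟨v, hvT, hmax⟩ := T.exists_max_image ord hTne
  have hin : 1 ≤ arcInDeg B v := by
    obtain ⟨a, haB, ha2⟩ := Finset.mem_image.1 hvT
    have : a ∈ B.filter fun a => a.2 = v := Finset.mem_filter.2 ⟨haB, ha2⟩
    exact Finset.card_pos.2 ⟨a, this⟩
  have hout : 1 ≤ arcOutDeg B v := hE v ▸ hin
  obtain ⟨b, hb⟩ := Finset.card_pos.1 hout
  simp only [Finset.mem_filter] at hb
  have h1 : ord v < ord b.2 := hb.2 ▸ hB b hb.1
  have h2 : ord b.2 ≤ ord v := hmax b.2 (Finset.mem_image_of_mem _ hb.1)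
  omega

lemma AT_le_of_degenerate {V : Type*} [Fintype V] {d : ℕ} {G : SimpleGraph V}
    (hG : Degenerate d G) : alonTarsiNumber G ≤ d + 1 := by
  obtain ⟨f, hinj, hf⟩ := degen_order hG
  set A : Finset (V × V) :=
    Finset.univ.filter fun a => G.Adj a.1 a.2 ∧ f a.1 < f a.2 with hA
  have hmemA : ∀ a : V × V, a ∈ A ↔ G.Adj a.1 a.2 ∧ f a.1 < f a.2 := by
    intro a; simp [hA]
  apply Nat.sInf_le
  refine ⟨A, ⟨fun a ha => ((hmemA a).1 ha).1, ?_⟩, ?_, ?_⟩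
  · intro u v huv
    have hne : f u ≠ f v := fun h => huv.ne (hinj h)
    simp only [hmemA, huv, huv.symm, true_and]
    omega
  · -- AT orientation
    have hkey : ∀ B ∈ A.powerset, IsEulerianSub B → B = ∅ := by
      intro B hB hE
      refine eulerian_empty_of_mono (ord := f) (fun a ha => ?_) hE
      exact ((hmemA a).1 (Finset.mem_powerset.1 hB ha)).2
    have h1 : (A.powerset.filter fun B => IsEulerianSub B ∧ Even B.card) = {∅} := by
      ext B
      simp only [Finset.mem_filter, Finset.mem_singleton]
      constructor
      · rintro ⟨hB, hE, _⟩; exact hkey B hB hE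
      · rintro rfl
        refine ⟨by simp, fun v => ?_, by simp⟩
        simp [arcInDeg, arcOutDeg]
    have h2 : (A.powerset.filter fun B => IsEulerianSub B ∧ ¬ Even B.card) = ∅ := by
      ext B
      simp only [Finset.mem_filter, Finset.notMem_empty, iff_false, not_and]
      intro hB hE
      rw [hkey B hB hE]
      simp
    unfold IsATOrientation
    rw [h1, h2]
    simp
  · intro v
    have hcard : arcOutDeg A v ≤ d := by
      refine le_trans (Finset.card_le_card_of_injOn Prod.snd ?_ ?_) (hf v)
      · intro a ha
        simp only [arcOutDeg, Finset.mem_coe, Finset.mem_filter, hmemA] at ha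
        simp only [Finset.mem_coe, Finset.mem_filter, Finset.mem_univ, true_and]
        rw [← ha.2]
        exact ha.1
      · intro a ha b hb hab
        simp only [arcOutDeg, Finset.coe_filter, Set.mem_setOf_eq] at ha hb
        exact Prod.ext (ha.2.trans hb.2.symm) hab
    omega

lemma fSum_adj {V E W : Type*} (K : SimpleGraph (V ⊕ E)) (H : SimpleGraph W)
    (a b : (V ⊕ E) × W) :
    (fSum K H).Adj a b ↔ a ≠ b ∧
      ((a.1 = b.1 ∧ (∃ u : V, a.1 = Sum.inl u) ∧ H.Adj a.2 b.2) ∨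
        (a.2 = b.2 ∧ K.Adj a.1 b.1)) := by
  unfold fSum
  rw [SimpleGraph.fromRel_adj]
  constructor
  · rintro ⟨hne, h | h⟩
    · exact ⟨hne, h⟩
    · refine ⟨hne, ?_⟩
      rcases h with ⟨h1, ⟨u, hu⟩, h3⟩ | ⟨h1, h2⟩
      · exact Or.inl ⟨h1.symm, ⟨u, h1 ▸ hu⟩, h3.symm⟩
      · exact Or.inr ⟨h1.symm, h2.symm⟩
  · rintro ⟨hne, h⟩
    exact ⟨hne, Or.inl h⟩

lemma rGraph_adj_inl_inl {V : Type*} {G : SimpleGraph V} {u v : V} :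
    (rGraph G).Adj (Sum.inl u) (Sum.inl v) ↔ G.Adj u v := by
  unfold rGraph
  rw [SimpleGraph.fromRel_adj]
  constructor
  · rintro ⟨_, h | h⟩
    · exact h
    · exact h.symm
  · intro h
    exact ⟨by simp [h.ne], Or.inl h⟩

lemma rGraph_adj_inr {V : Type*} {G : SimpleGraph V} {e : ↥G.edgeSet}
    {x : V ⊕ ↥G.edgeSet} (h : (rGraph G).Adj (Sum.inr e) x) :
    ∃ u : V, x = Sum.inl u ∧ u ∈ (e : Sym2 V) := by
  unfold rGraph at h
  rw [SimpleGraph.fromRel_adj] at h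
  obtain ⟨hne, h | h⟩ := h
  · cases x with
    | inl u => exact absurd h (by simp)
    | inr f => exact absurd h (by simp)
  · cases x with
    | inl u => exact ⟨u, rfl, h⟩
    | inr f => exact absurd h (by simp)

lemma rSum_degenerate {V W : Type*} [Fintype V] [Fintype W]
    {k l : ℕ} (hk : 1 ≤ k) (hl : 1 ≤ l) {G : SimpleGraph V} {H : SimpleGraph W}
    (hG : Degenerate k G) (hH : Degenerate l H) :
    Degenerate (k + l) (rSum G H) := by
  intro s hs
  by_cases hcase : ∃ p ∈ s, ∃ e : ↥G.edgeSet, p.1 = Sum.inr e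
  · -- a subdivision vertex is present: degree at most 2 ≤ k + l
    obtain ⟨p, hp, e, hpe⟩ := hcase
    refine ⟨p, hp, ?_⟩
    obtain ⟨⟨x, y⟩, hxy⟩ := (e : Sym2 V).exists_rep
    have hsub : (s.filter fun u => (rSum G H).Adj p u) ⊆
        {(Sum.inl x, p.2), (Sum.inl y, p.2)} := by
      intro b hb
      simp only [Finset.mem_filter] at hb
      have hadj := hb.2
      rw [rSum, fSum_adj] at hadj
      obtain ⟨hne, h | h⟩ := hadj
      · obtain ⟨_, ⟨u, hu⟩, _⟩ := h
        rw [hpe] at hu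
        exact absurd hu (by simp)
      · obtain ⟨h2, hK⟩ := h
        rw [hpe] at hK
        obtain ⟨u, hb1, hue⟩ := rGraph_adj_inr hK
        rw [← hxy, Sym2.mem_iff] at hue
        have hb' : b = (b.1, b.2) := rfl
        rcases hue with rfl | rfl
        · simp only [Finset.mem_insert, Finset.mem_singleton]
          left; rw [hb']; rw [hb1, h2]
        · simp only [Finset.mem_insert, Finset.mem_singleton]
          right; rw [hb']; rw [hb1, h2]
    calc (s.filter fun u => (rSum G H).Adj p u).card
        ≤ ({(Sum.inl x, p.2), (Sum.inl y, p.2)} : Finset _).card :=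
          Finset.card_le_card hsub
      _ ≤ 2 := Finset.card_insert_le _ _ |>.trans (by simp)
      _ ≤ k + l := by omega
  · -- all vertices of s are original: Cartesian-product argument
    push_neg at hcase
    have hall : ∀ p ∈ s, ∃ u : V, p.1 = Sum.inl u := by
      intro p hp
      cases hq : p.1 with
      | inl u => exact ⟨u, rfl⟩
      | inr e => exact absurd hq (by simpa using hcase p hp e)
    set P : Finset V := Finset.univ.filter fun u => ∃ w, (Sum.inl u, w) ∈ s with hP
    have hPmem : ∀ u : V, u ∈ P ↔ ∃ w, (Sum.inl u, w) ∈ s := by intro u; simp [hP]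
    have hPne : P.Nonempty := by
      obtain ⟨p, hp⟩ := hs
      obtain ⟨u, hu⟩ := hall p hp
      exact ⟨u, (hPmem u).2 ⟨p.2, by rw [← hu]; exact hp⟩⟩
    obtain ⟨u, huP, huk⟩ := hG P hPne
    set Su : Finset W := Finset.univ.filter fun w => (Sum.inl u, w) ∈ s with hSu
    have hSumem : ∀ w : W, w ∈ Su ↔ (Sum.inl u, w) ∈ s := by intro w; simp [hSu]
    have hSune : Su.Nonempty := by
      obtain ⟨w, hw⟩ := (hPmem u).1 huP
      exact ⟨w, (hSumem w).2 hw⟩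
    obtain ⟨w, hwSu, hwl⟩ := hH Su hSune
    refine ⟨(Sum.inl u, w), (hSumem w).1 hwSu, ?_⟩
    set N1 : Finset ((V ⊕ ↥G.edgeSet) × W) :=
      s.filter fun b => b.1 = Sum.inl u ∧ H.Adj w b.2 with hN1
    set N2 : Finset ((V ⊕ ↥G.edgeSet) × W) :=
      s.filter fun b => b.2 = w ∧ (rGraph G).Adj (Sum.inl u) b.1 with hN2
    have hsub : (s.filter fun b => (rSum G H).Adj (Sum.inl u, w) b) ⊆ N1 ∪ N2 := by
      intro b hb
      simp only [Finset.mem_filter] at hb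
      have hadj := hb.2
      rw [rSum, fSum_adj] at hadj
      obtain ⟨hne, h | h⟩ := hadj
      · obtain ⟨h1, _, h3⟩ := h
        exact Finset.mem_union_left _
          (Finset.mem_filter.2 ⟨hb.1, h1.symm, h3⟩)
      · exact Finset.mem_union_right _
          (Finset.mem_filter.2 ⟨hb.1, h.1.symm, h.2⟩)
    have hc1 : N1.card ≤ l := by
      refine le_trans (Finset.card_le_card_of_injOn Prod.snd ?_ ?_) hwl
      · intro b hb
        simp only [hN1, Finset.mem_coe, Finset.mem_filter] at hb
        refine Finset.mem_coe.2 (Finset.mem_filter.2 ⟨(hSumem b.2).2 ?_, hb.2.2⟩)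
        rw [← hb.2.1]; exact hb.1
      · intro a ha b hb hab
        simp only [hN1, Finset.coe_filter, Set.mem_setOf_eq] at ha hb
        exact Prod.ext (ha.2.1.trans hb.2.1.symm) hab
    have hc2 : N2.card ≤ k := by
      refine le_trans (Finset.card_le_card_of_injOn
        (fun b => Sum.elim id (fun _ => u) b.1) ?_ ?_) huk
      · intro b hb
        simp only [hN2, Finset.mem_coe, Finset.mem_filter] at hb
        obtain ⟨u', hu'⟩ := hall b hb.1
        have hG' : G.Adj u u' := by
          rw [hu'] at hb; exact rGraph_adj_inl_inl.1 hb.2.2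
        have heq : (fun b : (V ⊕ ↥G.edgeSet) × W =>
            Sum.elim id (fun _ => u) b.1) b = u' := by
          show Sum.elim id (fun _ => u) b.1 = u'
          rw [hu']; rfl
        refine Finset.mem_coe.2 (Finset.mem_filter.2 ⟨(hPmem _).2 ⟨b.2, ?_⟩, ?_⟩)
        · rw [heq, ← hu']; exact hb.1
        · rw [heq]; exact hG'
      · intro a ha b hb hab
        simp only [hN2, Finset.coe_filter, Set.mem_setOf_eq] at ha hb
        obtain ⟨ua, hua⟩ := hall a ha.1
        obtain ⟨ub, hub⟩ := hall b hb.1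
        simp only [hua, hub, Sum.elim_inl, id] at hab
        refine Prod.ext ?_ (ha.2.1.trans hb.2.1.symm)
        rw [hua, hub, hab]
    calc (s.filter fun b => (rSum G H).Adj (Sum.inl u, w) b).card
        ≤ (N1 ∪ N2).card := Finset.card_le_card hsub
      _ ≤ N1.card + N2.card := Finset.card_union_le _ _
      _ ≤ l + k := by omega
      _ = k + l := by omega
/-- if `G` is `k`-degenerate and `H` is `l`-degenerate (`k, l ≥ 1`),
then `AT(G +_R H) ≤ k + l + 1`. -/
theorem stmt9 {V W : Type*} [Fintype V] [Fintype W]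
    (k l : ℕ) (hk : 1 ≤ k) (hl : 1 ≤ l) (G : SimpleGraph V) (H : SimpleGraph W)
    (hG : Degenerate k G) (hH : Degenerate l H) :
    alonTarsiNumber (rSum G H) ≤ k + l + 1 := by
  have : Fintype ↥G.edgeSet := Set.Finite.fintype (Set.toFinite _)
  have h := AT_le_of_degenerate (rSum_degenerate hk hl hG hH)
  omega
end

section
/- For integers n ≥ 2 and m ≥ 2, let P_n and P_m be paths with n and m vertices respectively. Then AT(P_n +_R P_m) = 3. -/
open scoped Classical

open Sum

section Adj
variable {V W : Type*} (G : SimpleGraph V) (H : SimpleGraph W)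

lemma rGraph_adj (x y : V ⊕ ↥G.edgeSet) :
    (rGraph G).Adj x y ↔
      (∃ u v : V, x = inl u ∧ y = inl v ∧ G.Adj u v) ∨
      (∃ (u : V) (e : ↥G.edgeSet), x = inl u ∧ y = inr e ∧ u ∈ (e : Sym2 V)) ∨
      (∃ (u : V) (e : ↥G.edgeSet), x = inr e ∧ y = inl u ∧ u ∈ (e : Sym2 V)) := by
  unfold rGraph
  rw [SimpleGraph.fromRel_adj]
  constructor
  · rintro ⟨hne, h | h⟩ <;> rcases x with u | e <;> rcases y with v | f <;> simp_all
    · exact h.symm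
  · rintro (⟨u, v, rfl, rfl, h⟩ | ⟨u, e, rfl, rfl, h⟩ | ⟨u, e, rfl, rfl, h⟩)
    · exact ⟨by simp [h.ne], Or.inl h⟩
    · exact ⟨by simp, Or.inl h⟩
    · exact ⟨by simp, Or.inr h⟩

lemma rSum_adj (a b : (V ⊕ ↥G.edgeSet) × W) :
    (rSum G H).Adj a b ↔
      (a.1 = b.1 ∧ (∃ u : V, a.1 = inl u) ∧ H.Adj a.2 b.2) ∨
      (a.2 = b.2 ∧ (rGraph G).Adj a.1 b.1) := by
  unfold rSum fSum
  rw [SimpleGraph.fromRel_adj]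
  constructor
  · rintro ⟨hne, h | h⟩
    · exact h
    · rcases h with ⟨h1, h2, h3⟩ | ⟨h1, h2⟩
      · exact Or.inl ⟨h1.symm, h1 ▸ h2, h3.symm⟩
      · exact Or.inr ⟨h1.symm, h2.symm⟩
  · rintro (⟨h1, h2, h3⟩ | ⟨h1, h2⟩)
    · exact ⟨fun h => h3.ne (by rw [h]), Or.inl (Or.inl ⟨h1, h2, h3⟩)⟩
    · exact ⟨fun h => h2.ne (by rw [h]), Or.inl (Or.inr ⟨h1, h2⟩)⟩

end Adj
section Rank
open Finset
variable {X : Type*} [Fintype X] (G : SimpleGraph X) (r : X → ℕ)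

noncomputable def rankArcs : Finset (X × X) :=
  Finset.univ.filter (fun a => G.Adj a.1 a.2 ∧ r a.2 < r a.1)

lemma mem_rankArcs {a : X × X} :
    a ∈ rankArcs G r ↔ G.Adj a.1 a.2 ∧ r a.2 < r a.1 := by
  simp [rankArcs]

lemma rankArcs_isOrientation (h : ∀ x y, G.Adj x y → r x ≠ r y) :
    IsOrientation G (rankArcs G r) := by
  constructor
  · intro a ha; exact ((mem_rankArcs G r).1 ha).1
  · intro u v huv
    rw [mem_rankArcs, mem_rankArcs]
    dsimp only
    have := h u v huv
    constructor
    · rintro ⟨-, h1⟩ ⟨-, h2⟩; omega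
    · intro h1
      refine ⟨huv, ?_⟩
      by_contra h2
      exact h1 ⟨huv.symm, by omega⟩

lemma eulerian_of_rank {A B : Finset (X × X)} (hA : ∀ a ∈ A, r a.2 < r a.1)
    (hBA : B ⊆ A) (hB : IsEulerianSub B) : B = ∅ := by
  by_contra hne
  replace hne : B.Nonempty := Finset.nonempty_iff_ne_empty.2 hne
  obtain ⟨a₀, ha₀, hmax⟩ := B.exists_max_image (fun a => r a.1) hne
  have hout : 1 ≤ arcOutDeg B a₀.1 := by
    rw [arcOutDeg, Finset.one_le_card]
    exact ⟨a₀, Finset.mem_filter.2 ⟨ha₀, rfl⟩⟩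
  have hin : arcInDeg B a₀.1 = 0 := by
    rw [arcInDeg, Finset.card_eq_zero, Finset.filter_eq_empty_iff]
    intro b hb heq
    have h1 : r b.2 < r b.1 := hA b (hBA hb)
    have h2 := hmax b hb
    rw [heq] at h1
    omega
  have := hB a₀.1
  omega

lemma rankArcs_isAT : IsATOrientation (rankArcs G r) := by
  have key : ∀ B ∈ (rankArcs G r).powerset, IsEulerianSub B → B = ∅ := by
    intro B hB hE
    exact eulerian_of_rank r (fun a ha => ((mem_rankArcs G r).1 ha).2)
      (Finset.mem_powerset.1 hB) hE
  unfold IsATOrientation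
  have h1 : ((rankArcs G r).powerset.filter fun B => IsEulerianSub B ∧ Even B.card)
      = {∅} := by
    ext B
    simp only [Finset.mem_filter, Finset.mem_singleton]
    constructor
    · rintro ⟨h1, h2, h3⟩; exact key B h1 h2
    · rintro rfl
      refine ⟨Finset.empty_mem_powerset _, fun v => rfl, by simp⟩
  have h2 : ((rankArcs G r).powerset.filter fun B => IsEulerianSub B ∧ ¬ Even B.card)
      = ∅ := by
    rw [Finset.filter_eq_empty_iff]
    rintro B hB ⟨h1, h2⟩
    exact h2 (key B hB h1 ▸ (by simp))
  rw [h1, h2]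
  simp

end Rank
section RkDef
open Sum SimpleGraph

noncomputable def rk (n m : ℕ) :
    (Fin n ⊕ ↥(pathGraph n).edgeSet) × Fin m → ℕ :=
  fun x => match x.1 with
  | inl u => u.val + n * x.2.val
  | inr _ => n * m

lemma rk_lt (n m : ℕ) (u : Fin n) (w : Fin m) : u.val + n * w.val < n * m := by
  have h1 : u.val < n := u.isLt
  have h2 : n * (w.val + 1) ≤ n * m := Nat.mul_le_mul_left n w.isLt
  have h3 : n * (w.val + 1) = n * w.val + n := by ring
  omega

lemma rk_ne (n m : ℕ) : ∀ x y, (rSum (pathGraph n) (pathGraph m)).Adj x y →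
    rk n m x ≠ rk n m y := by
  rintro ⟨x1, xw⟩ ⟨y1, yw⟩ h
  rw [rSum_adj] at h
  rcases h with ⟨h1, ⟨u, hu⟩, h3⟩ | ⟨h1, h2⟩
  · dsimp only at h1 h3 hu
    subst hu h1
    have hne : xw.val ≠ yw.val := by
      rw [pathGraph_adj] at h3; omega
    simp only [rk]
    have hn : 0 < n := u.pos
    intro h
    apply hne
    have : n * xw.val = n * yw.val := by omega
    exact Nat.eq_of_mul_eq_mul_left hn this
  · dsimp only at h1 h2
    subst h1
    rw [rGraph_adj] at h2
    rcases h2 with ⟨u, v, rfl, rfl, h⟩ | ⟨u, e, rfl, rfl, -⟩ | ⟨u, e, rfl, rfl, -⟩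
    · simp only [rk]
      have : u.val ≠ v.val := Fin.val_ne_of_ne h.ne
      omega
    · simp only [rk]
      exact Nat.ne_of_lt (rk_lt n m u xw)
    · simp only [rk]
      exact Nat.ne_of_gt (rk_lt n m u xw)

end RkDef
section OutDeg
open Sum SimpleGraph Finset

lemma outdeg_le (n m : ℕ)
    (v : (Fin n ⊕ ↥(pathGraph n).edgeSet) × Fin m) :
    arcOutDeg (rankArcs (rSum (pathGraph n) (pathGraph m)) (rk n m)) v ≤ 2 := by
  classical
  rw [arcOutDeg]
  have hinj : ∀ (F : Finset ((((Fin n ⊕ ↥(pathGraph n).edgeSet) × Fin m)) ×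
        (((Fin n ⊕ ↥(pathGraph n).edgeSet) × Fin m))))
      (t : Finset ((Fin n ⊕ ↥(pathGraph n).edgeSet) × Fin m)),
      (∀ a ∈ F, a.1 = v) → (∀ a ∈ F, a.2 ∈ t) → F.card ≤ t.card := by
    intro F t hfst hmaps
    apply Finset.card_le_card_of_injOn Prod.snd hmaps
    intro a ha b hb hab
    rw [Finset.mem_coe] at ha hb
    exact Prod.ext ((hfst a ha).trans (hfst b hb).symm) hab
  obtain ⟨x1, w⟩ := v
  rcases x1 with u | e
  · -- original vertex
    have hn : 0 < n := u.pos
    have hm0 : 0 < m := w.pos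
    set t1 : (Fin n ⊕ ↥(pathGraph n).edgeSet) × Fin m :=
      (inl ⟨u.val - 1, by omega⟩, w) with ht1
    set t2 : (Fin n ⊕ ↥(pathGraph n).edgeSet) × Fin m :=
      (inl u, ⟨w.val - 1, by omega⟩) with ht2
    refine le_trans (hinj _ {t1, t2} ?_ ?_)
      (le_trans (Finset.card_insert_le _ _) (by simp))
    · intro a ha; simp only [Finset.mem_filter] at ha; exact ha.2
    rintro ⟨p, q1, q2⟩ ha
    simp only [Finset.mem_filter] at ha
    obtain ⟨haA, hp⟩ := ha
    subst hp
    rw [mem_rankArcs] at haA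
    obtain ⟨hadj, hrk⟩ := haA
    rw [rSum_adj] at hadj
    dsimp only at hadj hrk
    rcases hadj with ⟨h1, -, h3⟩ | ⟨h1, h2⟩
    · -- H-edge: q1 = inl u, q2 adjacent w
      subst h1
      simp [rk] at hrk
      have hlt : q2.val < w.val :=
        Nat.lt_of_mul_lt_mul_left (a := n) (by omega)
      rw [pathGraph_adj] at h3
      refine Finset.mem_insert.2 (Or.inr (Finset.mem_singleton.2 ?_))
      rw [ht2]
      exact Prod.ext rfl (Fin.ext (by simp; omega))
    · subst h1
      rw [rGraph_adj] at h2
      rcases h2 with ⟨u', v', hq, rfl, hadj'⟩ | ⟨u', e, hq, rfl, -⟩ | ⟨u', e, hq, -, -⟩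
      · rw [Sum.inl.injEq] at hq
        subst hq
        simp [rk] at hrk
        have hlt : v'.val < u.val := by omega
        rw [pathGraph_adj] at hadj'
        refine Finset.mem_insert.2 (Or.inl ?_)
        rw [ht1]
        exact Prod.ext (congrArg inl (Fin.ext (by simp; omega))) rfl
      · simp [rk] at hrk
        have := rk_lt n m u w
        omega
      · exact absurd hq (by simp)
  · -- edge vertex
    obtain ⟨s, hs⟩ := e
    obtain ⟨p, q, rfl⟩ : ∃ p q, s = s(p, q) := by
      induction s using Sym2.ind with | _ a b => exact ⟨a, b, rfl⟩
    set t1 : (Fin n ⊕ ↥(pathGraph n).edgeSet) × Fin m := (inl p, w) with ht1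
    set t2 : (Fin n ⊕ ↥(pathGraph n).edgeSet) × Fin m := (inl q, w) with ht2
    refine le_trans (hinj _ {t1, t2} ?_ ?_)
      (le_trans (Finset.card_insert_le _ _) (by simp))
    · intro a ha; simp only [Finset.mem_filter] at ha; exact ha.2
    rintro ⟨pp, q1, q2⟩ ha
    simp only [Finset.mem_filter] at ha
    obtain ⟨haA, hp⟩ := ha
    subst hp
    rw [mem_rankArcs] at haA
    obtain ⟨hadj, -⟩ := haA
    rw [rSum_adj] at hadj
    dsimp only at hadj
    rcases hadj with ⟨-, ⟨u', hu'⟩, -⟩ | ⟨h1, h2⟩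
    · exact absurd hu' (by simp)
    · subst h1
      rw [rGraph_adj] at h2
      rcases h2 with ⟨u', v', hq, -, -⟩ | ⟨u', e', hq, -, -⟩ | ⟨u', e', hx, rfl, hmem⟩
      · exact absurd hq (by simp)
      · exact absurd hq (by simp)
      · rw [Sum.inr.injEq] at hx
        subst hx
        have : u' = p ∨ u' = q := by
          rwa [Sym2.mem_iff] at hmem
        rcases this with rfl | rfl
        · exact Finset.mem_insert.2 (Or.inl (by rw [ht1]))
        · exact Finset.mem_insert.2 (Or.inr (Finset.mem_singleton.2 (by rw [ht2])))

end OutDeg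
section Lower
open Sum SimpleGraph Finset

set_option maxHeartbeats 1000000 in
lemma no_small_orientation (n m : ℕ) (hn : 2 ≤ n) (hm : 2 ≤ m)
    (A : Finset ((((Fin n ⊕ ↥(pathGraph n).edgeSet) × Fin m)) ×
        (((Fin n ⊕ ↥(pathGraph n).edgeSet) × Fin m))))
    (hor : IsOrientation (rSum (pathGraph n) (pathGraph m)) A)
    (hd : ∀ v, arcOutDeg A v ≤ 1) : False := by
  classical
  set u0 : Fin n := ⟨0, by omega⟩ with hu0
  set u1 : Fin n := ⟨1, by omega⟩ with hu1
  set w0 : Fin m := ⟨0, by omega⟩ with hw0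
  set w1 : Fin m := ⟨1, by omega⟩ with hw1
  have hadj01 : (pathGraph n).Adj u0 u1 := pathGraph_adj.2 (Or.inl rfl)
  have hadjw : (pathGraph m).Adj w0 w1 := pathGraph_adj.2 (Or.inl rfl)
  set e0 : ↥(pathGraph n).edgeSet := ⟨s(u0, u1), hadj01⟩ with he0
  set A0 : (Fin n ⊕ ↥(pathGraph n).edgeSet) × Fin m := (inl u0, w0) with hA0
  set B0 : (Fin n ⊕ ↥(pathGraph n).edgeSet) × Fin m := (inl u1, w0) with hB0
  set E0 : (Fin n ⊕ ↥(pathGraph n).edgeSet) × Fin m := (inr e0, w0) with hE0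
  set A1 : (Fin n ⊕ ↥(pathGraph n).edgeSet) × Fin m := (inl u0, w1) with hA1
  set B1 : (Fin n ⊕ ↥(pathGraph n).edgeSet) × Fin m := (inl u1, w1) with hB1
  set E1 : (Fin n ⊕ ↥(pathGraph n).edgeSet) × Fin m := (inr e0, w1) with hE1
  have hu01 : u0 ≠ u1 := by
    rw [hu0, hu1]; intro h; exact absurd (congrArg Fin.val h) (by norm_num)
  have hw01 : w0 ≠ w1 := by
    rw [hw0, hw1]; intro h; exact absurd (congrArg Fin.val h) (by norm_num)
  have d1 : s(A0, B0) ∉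
      ({s(A0, E0), s(B0, E0), s(A1, B1), s(A1, E1), s(B1, E1), s(A0, A1)} :
        Finset (Sym2 ((Fin n ⊕ ↥(pathGraph n).edgeSet) × Fin m))) := by
    simp [Sym2.eq_iff, Prod.ext_iff, hu01, hw01, hu01.symm, hw01.symm, hA0, hB0, hE0, hA1, hB1, hE1]
  have d2 : s(A0, E0) ∉
      ({s(B0, E0), s(A1, B1), s(A1, E1), s(B1, E1), s(A0, A1)} :
        Finset (Sym2 ((Fin n ⊕ ↥(pathGraph n).edgeSet) × Fin m))) := by
    simp [Sym2.eq_iff, Prod.ext_iff, hu01, hw01, hu01.symm, hw01.symm, hA0, hB0, hE0, hA1, hB1, hE1]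
  have d3 : s(B0, E0) ∉
      ({s(A1, B1), s(A1, E1), s(B1, E1), s(A0, A1)} :
        Finset (Sym2 ((Fin n ⊕ ↥(pathGraph n).edgeSet) × Fin m))) := by
    simp [Sym2.eq_iff, Prod.ext_iff, hu01, hw01, hu01.symm, hw01.symm, hA0, hB0, hE0, hA1, hB1, hE1]
  have d4 : s(A1, B1) ∉
      ({s(A1, E1), s(B1, E1), s(A0, A1)} :
        Finset (Sym2 ((Fin n ⊕ ↥(pathGraph n).edgeSet) × Fin m))) := by
    simp [Sym2.eq_iff, Prod.ext_iff, hu01, hw01, hu01.symm, hw01.symm, hA0, hB0, hE0, hA1, hB1, hE1]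
  have d5 : s(A1, E1) ∉
      ({s(B1, E1), s(A0, A1)} :
        Finset (Sym2 ((Fin n ⊕ ↥(pathGraph n).edgeSet) × Fin m))) := by
    simp [Sym2.eq_iff, Prod.ext_iff, hu01, hw01, hu01.symm, hw01.symm, hA0, hB0, hE0, hA1, hB1, hE1]
  have d6 : s(B1, E1) ∉
      ({s(A0, A1)} :
        Finset (Sym2 ((Fin n ⊕ ↥(pathGraph n).edgeSet) × Fin m))) := by
    simp [Sym2.eq_iff, Prod.ext_iff, hu01, hw01, hu01.symm, hw01.symm, hA0, hB0, hE0, hA1, hB1, hE1]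
  set S : Finset ((Fin n ⊕ ↥(pathGraph n).edgeSet) × Fin m) :=
    {A0, B0, E0, A1, B1, E1} with hS
  set B : Finset _ := A.filter (fun a => a.1 ∈ S ∧ a.2 ∈ S) with hB
  set GG := rSum (pathGraph n) (pathGraph m) with hGG
  -- adjacency facts
  have adjAB : ∀ w : Fin m, GG.Adj (inl u0, w) (inl u1, w) := fun w =>
    (rSum_adj _ _ _ _).2 (Or.inr ⟨rfl, (rGraph_adj _ _ _).2
      (Or.inl ⟨u0, u1, rfl, rfl, hadj01⟩)⟩)
  have adjAE : ∀ w : Fin m, GG.Adj (inl u0, w) (inr e0, w) := fun w =>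
    (rSum_adj _ _ _ _).2 (Or.inr ⟨rfl, (rGraph_adj _ _ _).2
      (Or.inr (Or.inl ⟨u0, e0, rfl, rfl, Sym2.mem_mk_left u0 u1⟩))⟩)
  have adjBE : ∀ w : Fin m, GG.Adj (inl u1, w) (inr e0, w) := fun w =>
    (rSum_adj _ _ _ _).2 (Or.inr ⟨rfl, (rGraph_adj _ _ _).2
      (Or.inr (Or.inl ⟨u1, e0, rfl, rfl, Sym2.mem_mk_right u0 u1⟩))⟩)
  have adjAA : GG.Adj A0 A1 :=
    (rSum_adj _ _ _ _).2 (Or.inl ⟨rfl, ⟨u0, rfl⟩, hadjw⟩)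
  -- each edge contributes an arc inside S
  have harc : ∀ x y, GG.Adj x y → x ∈ S → y ∈ S →
      s(x, y) ∈ B.image (fun a => s(a.1, a.2)) := by
    intro x y hxy hxS hyS
    by_cases h : (x, y) ∈ A
    · refine Finset.mem_image.2 ⟨(x, y), ?_, rfl⟩
      rw [hB]
      simp only [Finset.mem_filter]
      exact ⟨h, hxS, hyS⟩
    · have h' : (y, x) ∈ A := by
        by_contra hc
        exact h ((hor.2 x y hxy).2 hc)
      refine Finset.mem_image.2 ⟨(y, x), ?_, Sym2.eq_swap⟩
      rw [hB]
      simp only [Finset.mem_filter]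
      exact ⟨h', hyS, hxS⟩
  set E7 : Finset (Sym2 ((Fin n ⊕ ↥(pathGraph n).edgeSet) × Fin m)) :=
    {s(A0, B0), s(A0, E0), s(B0, E0), s(A1, B1), s(A1, E1), s(B1, E1), s(A0, A1)}
    with hE7
  have hsub : E7 ⊆ B.image (fun a => s(a.1, a.2)) := by
    intro z hz
    rw [hE7] at hz
    simp only [Finset.mem_insert, Finset.mem_singleton] at hz
    have m1 : A0 ∈ S := by rw [hS]; simp
    have m2 : B0 ∈ S := by rw [hS]; simp
    have m3 : E0 ∈ S := by rw [hS]; simp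
    have m4 : A1 ∈ S := by rw [hS]; simp
    have m5 : B1 ∈ S := by rw [hS]; simp
    have m6 : E1 ∈ S := by rw [hS]; simp
    rcases hz with rfl | rfl | rfl | rfl | rfl | rfl | rfl
    · exact harc _ _ (adjAB w0) m1 m2
    · exact harc _ _ (adjAE w0) m1 m3
    · exact harc _ _ (adjBE w0) m2 m3
    · exact harc _ _ (adjAB w1) m4 m5
    · exact harc _ _ (adjAE w1) m4 m6
    · exact harc _ _ (adjBE w1) m5 m6
    · exact harc _ _ adjAA m1 m4
  have h7 : 7 ≤ E7.card := by
    rw [hE7, Finset.card_insert_of_notMem d1, Finset.card_insert_of_notMem d2,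
      Finset.card_insert_of_notMem d3, Finset.card_insert_of_notMem d4,
      Finset.card_insert_of_notMem d5, Finset.card_insert_of_notMem d6,
      Finset.card_singleton]
  have hBcard : B.card ≤ 6 := by
    have hfib := Finset.card_eq_sum_card_fiberwise
      (f := Prod.fst) (s := B) (t := S)
      (fun a ha => by
        rw [hB] at ha; simp only [Finset.mem_coe, Finset.mem_filter] at ha; exact ha.2.1)
    have hone : ∀ v ∈ S, (B.filter (fun a => a.1 = v)).card ≤ 1 := by
      intro v _
      refine le_trans (le_trans (Finset.card_le_card ?_) (le_refl _)) (hd v)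
      intro a ha
      simp only [hB, Finset.mem_filter] at ha ⊢
      exact ⟨ha.1.1, ha.2⟩
    have hS6 : S.card ≤ 6 := by
      rw [hS]
      refine le_trans (Finset.card_insert_le _ _) ?_
      refine Nat.succ_le_succ ?_
      refine le_trans (Finset.card_insert_le _ _) ?_
      refine Nat.succ_le_succ ?_
      refine le_trans (Finset.card_insert_le _ _) ?_
      refine Nat.succ_le_succ ?_
      refine le_trans (Finset.card_insert_le _ _) ?_
      refine Nat.succ_le_succ ?_
      refine le_trans (Finset.card_insert_le _ _) ?_
      simp
    calc B.card = ∑ v ∈ S, (B.filter (fun a => a.1 = v)).card := hfib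
      _ ≤ ∑ _v ∈ S, 1 := Finset.sum_le_sum hone
      _ = S.card := by simp
      _ ≤ 6 := hS6
  have : 7 ≤ B.card :=
    le_trans h7 (le_trans (Finset.card_le_card hsub) Finset.card_image_le)
  omega

end Lower
set_option maxHeartbeats 1000000 in
/-- `AT(P_n +_R P_m) = 3` for `n, m ≥ 2`. -/
theorem stmt10 (n m : ℕ) (hn : 2 ≤ n) (hm : 2 ≤ m) :
    alonTarsiNumber (rSum (SimpleGraph.pathGraph n) (SimpleGraph.pathGraph m)) = 3 := by
  classical
  have hor := rankArcs_isOrientation (rSum (SimpleGraph.pathGraph n)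
    (SimpleGraph.pathGraph m)) (rk n m) (rk_ne n m)
  have hat := rankArcs_isAT (rSum (SimpleGraph.pathGraph n)
    (SimpleGraph.pathGraph m)) (rk n m)
  have h3 : 3 ∈ {k : ℕ | ∃ A, IsOrientation (rSum (SimpleGraph.pathGraph n)
      (SimpleGraph.pathGraph m)) A ∧ IsATOrientation A ∧
      ∀ v, arcOutDeg A v < k} := by
    refine ⟨rankArcs (rSum (SimpleGraph.pathGraph n) (SimpleGraph.pathGraph m))
      (rk n m), hor, hat, fun v => lt_of_le_of_lt (outdeg_le n m v) (by norm_num)⟩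
  rw [alonTarsiNumber]
  refine le_antisymm (Nat.sInf_le h3) ?_
  have hmem := Nat.sInf_mem (Set.nonempty_of_mem h3)
  obtain ⟨A, hA1, hA2, hA3⟩ := hmem
  by_contra hlt
  push_neg at hlt
  have hsmall : ∀ v, arcOutDeg A v ≤ 1 := fun v => by
    have h1 := hA3 v
    omega
  exact no_small_orientation n m hn hm A hA1 hsmall
end
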